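/- Let X be a Polish space, let f : X → X be a Borel-measurable function, and let G = (X, E) be the graph generated by f, i.e. E = {(v,w) : v ≠ w and (f(v) = w or f(w) = v)}. If G admits a proper coloring with finitely many colors all of whose color classes are Borel, then G admits a proper coloring with at most 3 colors all of whose color classes are Borel. (In particular, the Borel chromatic number of a graph generated by a single Borel function is either at most 3 or infinite.) -/

import Mathlib

open MeasureTheory

section Aux

/-- In a sequence over `Fin k` with consecutive terms distinct, there is a local
strict maximum pattern `g n < g (n+1) > g (n+2)`. -/
lemma exists_local_max {k : ℕ} (g : ℕ → Fin k) (hg : ∀ n, g n ≠ g (n + 1)) :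
    ∃ n, g n < g (n + 1) ∧ g (n + 2) < g (n + 1) := by
  by_contra hcon
  push_neg at hcon
  -- first, there is an ascent somewhere
  have hasc : ∃ n, g n < g (n + 1) := by
    by_contra hasc
    push_neg at hasc
    have hdec : ∀ n, g (n + 1) < g n := fun n =>
      lt_of_le_of_ne (hasc n) (fun he => hg n he.symm)
    have : StrictAnti g := strictAnti_nat_of_succ_lt hdec
    exact Set.not_injOn_infinite_finite_image (Set.infinite_univ (α := ℕ))
      (Set.toFinite _) (this.injective.injOn)
  obtain ⟨n₀, hn₀⟩ := hasc
  -- from an ascent, the sequence keeps ascending forever: contradiction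
  have hstep : ∀ m, g m < g (m + 1) → g (m + 1) < g (m + 2) := by
    intro m hm
    exact lt_of_le_of_ne (hcon m hm) (hg (m + 1))
  have hmono : ∀ j, g (n₀ + j) < g (n₀ + j + 1) := by
    intro j
    induction j with
    | zero => simpa using hn₀
    | succ i ih =>
        have := hstep (n₀ + i) ih
        convert this using 2 <;> omega
  have : StrictMono (fun j => g (n₀ + j)) := by
    apply strictMono_nat_of_lt_succ
    intro j
    exact hmono j
  exact Set.not_injOn_infinite_finite_image (Set.infinite_univ (α := ℕ))
    (Set.toFinite _) (this.injective.injOn)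

end Aux

/-- The Borel chromatic number of a graph generated by a single Borel function
is at most 3 if it is finite. -/
theorem borel_chromatic_of_single_function
    {X : Type*} [TopologicalSpace X] [PolishSpace X]
    [MeasurableSpace X] [BorelSpace X]
    (f : X → X) (hf : Measurable f)
    (E : Set (X × X))
    (hE : E = {p : X × X | p.1 ≠ p.2 ∧ (f p.1 = p.2 ∨ f p.2 = p.1)})
    (h : ∃ (k : ℕ) (c : X → Fin k),
      (∀ v w, (v, w) ∈ E → c v ≠ c w) ∧ ∀ a, MeasurableSet (c ⁻¹' {a})) :
    ∃ c : X → Fin 3,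
      (∀ v w, (v, w) ∈ E → c v ≠ c w) ∧ ∀ a, MeasurableSet (c ⁻¹' {a}) := by
  classical
  obtain ⟨k, c, hc, hcm⟩ := h
  have hcmeas : Measurable c := measurable_to_countable' hcm
  -- the independent recurrent set B
  set B : Set X := {x | f x = x ∨ (c x < c (f x) ∧ c (f (f x)) < c (f x))} with hB
  -- B is measurable
  have hfix : MeasurableSet {x : X | f x = x} := by
    have : {x : X | f x = x} = (fun x => (f x, x)) ⁻¹' Set.diagonal X := by
      ext x; simp [Set.diagonal, eq_comm]
    rw [this]
    exact (hf.prodMk measurable_id) isClosed_diagonal.measurableSet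
  have hlt : ∀ (g₁ g₂ : X → X), Measurable g₁ → Measurable g₂ →
      MeasurableSet {x : X | c (g₁ x) < c (g₂ x)} := by
    intro g₁ g₂ h₁ h₂
    have : {x : X | c (g₁ x) < c (g₂ x)} =
        (fun x => (c (g₁ x), c (g₂ x))) ⁻¹' {p : Fin k × Fin k | p.1 < p.2} := rfl
    rw [this]
    exact ((hcmeas.comp h₁).prodMk (hcmeas.comp h₂))
      (Set.to_countable _).measurableSet
  have hBm : MeasurableSet B := by
    exact hfix.union ((hlt id f measurable_id hf).inter
      (hlt (f ∘ f) f (hf.comp hf) hf))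
  -- main structural facts about edges
  have hedge : ∀ v, f v ≠ v → c v ≠ c (f v) := by
    intro v hv
    apply hc
    rw [hE]
    exact ⟨fun he => hv he.symm, Or.inl rfl⟩
  -- recurrence: every forward orbit enters B
  have hrec : ∀ x, ∃ n, f^[n] x ∈ B := by
    intro x
    by_cases hfxd : ∃ n, f (f^[n] x) = f^[n] x
    · obtain ⟨n, hn⟩ := hfxd
      exact ⟨n, Or.inl hn⟩
    · push_neg at hfxd
      have hne : ∀ n, c (f^[n] x) ≠ c (f^[n+1] x) := by
        intro n
        rw [Function.iterate_succ_apply']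
        exact hedge _ (hfxd n)
      obtain ⟨n, h1, h2⟩ := exists_local_max (fun n => c (f^[n] x)) hne
      have e1 : f (f^[n] x) = f^[n+1] x := (Function.iterate_succ_apply' f n x).symm
      have e2 : f (f^[n+1] x) = f^[n+2] x := (Function.iterate_succ_apply' f (n+1) x).symm
      refine ⟨n, Or.inr ⟨?_, ?_⟩⟩
      · rw [e1]; exact h1
      · rw [e1, e2]; exact h2
  -- distance to B
  let nn : X → ℕ := fun x => Nat.find (hrec x)
  -- if v ∉ B and f v ≠ v, then nn v = nn (f v) + 1
  have hnn_succ : ∀ v, v ∉ B → nn v = nn (f v) + 1 := by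
    intro v hv
    have h1 : f^[nn (f v) + 1] v ∈ B := by
      rw [Function.iterate_succ_apply]
      exact Nat.find_spec (hrec (f v))
    have h2 : ∀ m, m < nn (f v) + 1 → f^[m] v ∉ B := by
      intro m hm
      match m with
      | 0 => simpa using hv
      | (i + 1) =>
        rw [Function.iterate_succ_apply]
        exact Nat.find_min (hrec (f v)) (show i < nn (f v) by omega)
    exact le_antisymm (Nat.find_min' (hrec v) h1)
      (by
        by_contra hlt'
        push_neg at hlt'
        exact h2 _ hlt' (Nat.find_spec (hrec v)))
  -- B is independent: no edge within B
  have hind : ∀ v, v ≠ f v → v ∈ B → f v ∈ B → False := by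
    intro v hne hvB hfvB
    rcases hvB with h1 | ⟨h1, h2⟩
    · exact hne h1.symm
    rcases hfvB with h3 | ⟨h3, h4⟩
    · rw [h3] at h2; exact lt_irrefl _ h2
    · exact lt_asymm h2 h3
  -- the 3-coloring
  refine ⟨fun x => if x ∈ B then 2 else ⟨nn x % 2, by omega⟩, ?_, ?_⟩
  · -- properness
    have key : ∀ v, v ≠ f v →
        (if v ∈ B then (2 : Fin 3) else ⟨nn v % 2, by omega⟩) ≠
        (if f v ∈ B then 2 else ⟨nn (f v) % 2, by omega⟩) := by
      intro v hne
      by_cases hvB : v ∈ B <;> by_cases hfvB : f v ∈ B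
      · exact absurd (hind v hne hvB hfvB) id
      · simp only [if_pos hvB, if_neg hfvB]
        intro hcon
        have := congrArg Fin.val hcon
        simp at this
        omega
      · simp only [if_neg hvB, if_pos hfvB]
        intro hcon
        have := congrArg Fin.val hcon
        simp at this
        omega
      · simp only [if_neg hvB, if_neg hfvB]
        intro hcon
        have := congrArg Fin.val hcon
        simp only [] at this
        have hs := hnn_succ v hvB
        omega
    intro v w hvw
    rw [hE] at hvw
    obtain ⟨hne, hor | hor⟩ := hvw
    · have hne' : v ≠ w := hne
      have hor' : f v = w := hor
      have hvv : v ≠ f v := by rw [hor']; exact hne'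
      have := key v hvv
      show (if v ∈ B then (2 : Fin 3) else ⟨nn v % 2, by omega⟩) ≠
        (if w ∈ B then 2 else ⟨nn w % 2, by omega⟩)
      rw [← hor']
      exact this
    · have hne' : v ≠ w := hne
      have hor' : f w = v := hor
      have hww : w ≠ f w := by rw [hor']; exact hne'.symm
      have := key w hww
      show (if v ∈ B then (2 : Fin 3) else ⟨nn v % 2, by omega⟩) ≠
        (if w ∈ B then 2 else ⟨nn w % 2, by omega⟩)
      rw [← hor']
      exact this.symm
  · -- measurability
    have hfind : ∀ n, MeasurableSet {x | nn x = n} := by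
      intro n
      have : {x | nn x = n} = {x | f^[n] x ∈ B} ∩ ⋂ m ∈ Set.Iio n, {x | f^[m] x ∉ B} := by
        ext x
        simp only [Set.mem_setOf_eq, Set.mem_inter_iff, Set.mem_iInter, Set.mem_Iio, nn]
        constructor
        · intro he
          exact ⟨he ▸ Nat.find_spec (hrec x), fun m hm => Nat.find_min (hrec x) (he ▸ hm)⟩
        · intro ⟨h1, h2⟩
          exact le_antisymm (Nat.find_min' (hrec x) h1)
            (by by_contra hl; push_neg at hl; exact h2 _ hl (Nat.find_spec (hrec x)))
      rw [this]
      have hit : ∀ m : ℕ, Measurable (f^[m]) := fun m => hf.iterate m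
      exact ((hit n) hBm).inter
        (MeasurableSet.biInter (Set.to_countable _) (fun m _ => ((hit m) hBm).compl))
    intro a
    have hsplit : (fun x => if x ∈ B then (2 : Fin 3) else ⟨nn x % 2, by omega⟩) ⁻¹' {a} =
        (if a = 2 then B else ∅) ∪ (Bᶜ ∩ ⋃ n ∈ {n : ℕ | (n % 2 : ℕ) = (a : ℕ)}, {x | nn x = n}) := by
      ext x
      simp only [Set.mem_preimage, Set.mem_singleton_iff, Set.mem_union, Set.mem_inter_iff,
        Set.mem_compl_iff, Set.mem_iUnion, Set.mem_setOf_eq]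
      by_cases hxB : x ∈ B
      · rw [if_pos hxB]
        constructor
        · intro he
          exact Or.inl (by rw [← he]; simpa using hxB)
        · rintro (he | ⟨hc1, -⟩)
          · by_cases ha : a = 2
            · rw [ha]
            · rw [if_neg ha] at he
              exact absurd he (Set.notMem_empty x)
          · exact absurd hxB hc1
      · rw [if_neg hxB]
        constructor
        · intro he
          exact Or.inr ⟨hxB, nn x, by rw [← he], rfl⟩
        · rintro (he | ⟨-, n, hn1, hn2⟩)
          · by_cases ha : a = 2
            · rw [ha, if_pos rfl] at he
              exact absurd he hxB
            · rw [if_neg ha] at he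
              exact absurd he (Set.notMem_empty x)
          · apply Fin.ext
            show nn x % 2 = (a : ℕ)
            rw [hn2]
            exact hn1
    rw [hsplit]
    refine MeasurableSet.union ?_ (hBm.compl.inter
      (MeasurableSet.biUnion (Set.to_countable _) (fun n _ => hfind n)))
    split
    · exact hBm
    · exact MeasurableSet.empty
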